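/- Let X be a real Banach space, F a closed subspace with dim(X/F) = m ≥ 1, and Q : X → X/F the quotient map. Let 0 < ε < 1 and let Z be a subspace of X such that ‖Q(z)‖ ≤ (ε/(2m))‖z‖ for all z ∈ Z. Then there exists a bounded linear map T : Z → X with T(z) ∈ F for all z ∈ Z and (1 − ε)‖z‖ ≤ ‖T(z)‖ ≤ (1 + ε)‖z‖ for all z ∈ Z; in particular F contains a subspace (1+ε)/(1−ε)-isomorphic to Z. -/

import Mathlib

open Module Function

theorem auerbach {Y : Type*} [NormedAddCommGroup Y] [NormedSpace ℝ Y]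
    [FiniteDimensional ℝ Y] {m : ℕ} (hm : 1 ≤ m) (hdim : Module.finrank ℝ Y = m) :
    ∃ e : Basis (Fin m) ℝ Y, (∀ i, ‖e i‖ = 1) ∧ ∀ i (y : Y), |e.coord i y| ≤ ‖y‖ := by
  haveI : Nontrivial Y := Module.nontrivial_of_finrank_pos (R := ℝ) (by omega)
  let b : Basis (Fin m) ℝ Y := (Module.finBasis ℝ Y).reindex (finCongr hdim)
  set S : Set (Fin m → Y) := Set.univ.pi fun _ => Metric.sphere (0 : Y) 1 with hS
  have hmemS : ∀ v : Fin m → Y, v ∈ S ↔ ∀ i, ‖v i‖ = 1 := by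
    intro v
    simp [hS, Set.mem_pi]
  have hSc : IsCompact S := isCompact_univ_pi fun _ => isCompact_sphere 0 1
  have hSne : S.Nonempty := by
    refine ⟨fun i => ‖b i‖⁻¹ • b i, (hmemS _).2 fun i => ?_⟩
    rw [norm_smul, norm_inv, norm_norm, inv_mul_cancel₀ (norm_ne_zero_iff.2 (b.ne_zero i))]
  have hf : Continuous fun v : Fin m → Y => |b.det v| := by
    have h1 : Continuous fun v : Fin m → Y =>
        Matrix.det (Matrix.of fun i j => b.repr (v j) i) := by
      refine Continuous.matrix_det ?_
      refine continuous_matrix fun i j => ?_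
      exact ((b.coord i).continuous_of_finiteDimensional).comp (continuous_apply j)
    have h2 : (fun v : Fin m → Y => |b.det v|) =
        fun v => |Matrix.det (Matrix.of fun i j => b.repr (v j) i)| := by
      funext v
      rw [Basis.det_apply]
      rfl
    rw [h2]
    exact continuous_abs.comp h1
  obtain ⟨v, hvS, hmax⟩ := hSc.exists_isMaxOn hSne hf.continuousOn
  have hvnorm : ∀ i, ‖v i‖ = 1 := (hmemS v).1 hvS
  have hmax' : ∀ w ∈ S, |b.det w| ≤ |b.det v| := fun w hw => hmax hw
  -- positivity of max
  have hpos : 0 < |b.det v| := by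
    obtain ⟨w₀, hw₀⟩ := hSne
    have hw₀' : ∀ i, ‖w₀ i‖ = 1 := (hmemS w₀).1 hw₀
    -- use the normalized basis itself
    have hb : (fun i => ‖b i‖⁻¹ • b i) ∈ S := by
      refine (hmemS _).2 fun i => ?_
      rw [norm_smul, norm_inv, norm_norm, inv_mul_cancel₀ (norm_ne_zero_iff.2 (b.ne_zero i))]
    have hdet : b.det (fun i => ‖b i‖⁻¹ • b i) = (∏ i, ‖b i‖⁻¹) • b.det b := by
      exact b.det.toMultilinearMap.map_smul_univ (fun i => ‖b i‖⁻¹) b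
    have hne : b.det (fun i => ‖b i‖⁻¹ • b i) ≠ 0 := by
      rw [hdet, b.det_self, smul_eq_mul, mul_one]
      exact Finset.prod_ne_zero_iff.2 fun i _ =>
        inv_ne_zero (norm_ne_zero_iff.2 (b.ne_zero i))
    have := hmax' _ hb
    have h0 : 0 < |b.det (fun i => ‖b i‖⁻¹ • b i)| := abs_pos.2 hne
    linarith
  have hdetv : IsUnit (b.det v) := isUnit_iff_ne_zero.2 (fun h => by simp [h] at hpos)
  obtain ⟨hli, hsp⟩ := (Basis.is_basis_iff_det b (v := v)).2 hdetv
  refine ⟨Basis.mk hli hsp.ge, fun i => by rw [Basis.coe_mk]; exact hvnorm i, ?_⟩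
  intro i y
  have key := b.det_smul_mk_coord_eq_det_update hli hsp.ge i
  have key' : b.det v * (Basis.mk hli hsp.ge).coord i y = b.det (Function.update v i y) :=
    congrArg (fun f => f y) key
  -- bound |b.det (update v i y)| ≤ |b.det v| * ‖y‖
  have hupd : |b.det (Function.update v i y)| ≤ |b.det v| * ‖y‖ := by
    rcases eq_or_ne y 0 with rfl | hy
    · simp
    · have hyn : ‖y‖ ≠ 0 := norm_ne_zero_iff.2 hy
      have hmem : Function.update v i (‖y‖⁻¹ • y) ∈ S := by
        refine (hmemS _).2 fun j => ?_
        rcases eq_or_ne j i with rfl | hj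
        · rw [Function.update_self, norm_smul, norm_inv, norm_norm,
            inv_mul_cancel₀ hyn]
        · rw [Function.update_of_ne hj]; exact hvnorm j
      have hsm : b.det (Function.update v i y) =
          ‖y‖ • b.det (Function.update v i (‖y‖⁻¹ • y)) := by
        have := b.det.toMultilinearMap.map_update_smul v i ‖y‖ (‖y‖⁻¹ • y)
        rw [smul_inv_smul₀ hyn] at this
        exact this
      rw [hsm, smul_eq_mul, abs_mul, abs_of_nonneg (norm_nonneg y), mul_comm]
      exact mul_le_mul_of_nonneg_right (hmax' _ hmem) (norm_nonneg y)
  have : |b.det v| * |(Basis.mk hli hsp.ge).coord i y| ≤ |b.det v| * ‖y‖ := by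
    rw [← abs_mul, key']
    exact hupd
  exact le_of_mul_le_mul_left this hpos

/-- Let `F` be a closed subspace of a real Banach space `X` with
`dim (X ⧸ F) = m ≥ 1` and let `Q = F.mkQ : X → X ⧸ F` be the quotient map.  If `0 < ε < 1`
and `Z` is a subspace of `X` with `‖Q z‖ ≤ (ε / (2m)) ‖z‖` for all `z ∈ Z`, then there is a
bounded linear map `T : Z → X` taking values in `F` and satisfying
`(1 - ε) ‖z‖ ≤ ‖T z‖ ≤ (1 + ε) ‖z‖` for all `z ∈ Z`; in particular `F` contains a subspace
`(1+ε)/(1-ε)`-isomorphic to `Z`. -/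
theorem statement2 {X : Type*} [NormedAddCommGroup X] [NormedSpace ℝ X] [CompleteSpace X]
    (F : Submodule ℝ X) (hFc : IsClosed (F : Set X)) (m : ℕ) (hm : 1 ≤ m)
    [FiniteDimensional ℝ (X ⧸ F)] (hdim : Module.finrank ℝ (X ⧸ F) = m)
    (ε : ℝ) (hε0 : 0 < ε) (hε1 : ε < 1) (Z : Submodule ℝ X)
    (hZ : ∀ z ∈ Z, ‖F.mkQ z‖ ≤ ε / (2 * m) * ‖z‖) :
    ∃ T : Z →L[ℝ] X, (∀ z : Z, T z ∈ F) ∧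
      ∀ z : Z, (1 - ε) * ‖z‖ ≤ ‖T z‖ ∧ ‖T z‖ ≤ (1 + ε) * ‖z‖ := by
  obtain ⟨e, hnorm, hcoord⟩ := auerbach hm hdim
  -- lift the basis vectors with norm < 2
  have hlift : ∀ i : Fin m, ∃ x : X, F.mkQ x = e i ∧ ‖x‖ < 2 := by
    intro i
    obtain ⟨x, hx, hx2⟩ := Submodule.Quotient.norm_mk_lt (S := F) (e i) one_pos
    exact ⟨x, hx, by rw [hnorm i] at hx2; linarith⟩
  choose x hx hx2 using hlift
  -- the coordinate functionals composed with the quotient map, as continuous linear maps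
  have hφbound : ∀ (i : Fin m) (w : X), ‖(e.coord i) (F.mkQ w)‖ ≤ 1 * ‖w‖ := by
    intro i w
    rw [one_mul, Real.norm_eq_abs]
    exact (hcoord i (F.mkQ w)).trans (Submodule.Quotient.norm_mk_le F w)
  let φ : Fin m → (X →L[ℝ] ℝ) := fun i =>
    LinearMap.mkContinuous ((e.coord i).comp F.mkQ) 1 (hφbound i)
  have hφ : ∀ (i : Fin m) (w : X), φ i w = e.coord i (F.mkQ w) := fun i w => rfl
  let g : X →L[ℝ] X := ∑ i : Fin m, (φ i).smulRight (x i)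
  have hg : ∀ w : X, g w = ∑ i : Fin m, (φ i w) • x i := by
    intro w
    simp [g, ContinuousLinearMap.sum_apply]
  refine ⟨Z.subtypeL - g.comp Z.subtypeL, ?_, ?_⟩
  · intro z
    have : F.mkQ ((z : X) - g (z : X)) = 0 := by
      rw [map_sub]
      have : F.mkQ (g (z : X)) = F.mkQ (z : X) := by
        rw [hg, map_sum]
        have : ∀ i : Fin m, F.mkQ ((φ i (z : X)) • x i)
            = e.repr (F.mkQ (z : X)) i • e i := by
          intro i
          rw [map_smul, hx i, hφ]
          rfl
        rw [Finset.sum_congr rfl fun i _ => this i]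
        exact e.sum_repr (F.mkQ (z : X))
      rw [this, sub_self]
    have hmem := (Submodule.Quotient.mk_eq_zero F).1 this
    simpa using hmem
  · intro z
    have hgz : ‖g (z : X)‖ ≤ ε * ‖z‖ := by
      rw [hg]
      calc ‖∑ i : Fin m, (φ i (z : X)) • x i‖
          ≤ ∑ i : Fin m, ‖(φ i (z : X)) • x i‖ := norm_sum_le _ _
        _ ≤ ∑ i : Fin m, ‖F.mkQ (z : X)‖ * 2 := by
            refine Finset.sum_le_sum fun i _ => ?_
            rw [norm_smul]
            refine mul_le_mul ?_ (le_of_lt (hx2 i)) (norm_nonneg _) (norm_nonneg _)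
            rw [hφ, Real.norm_eq_abs]
            exact hcoord i _
        _ = 2 * m * ‖F.mkQ (z : X)‖ := by
            rw [Finset.sum_const, Finset.card_univ, Fintype.card_fin]
            push_cast; ring
        _ ≤ 2 * m * (ε / (2 * m) * ‖z‖) := by
            refine mul_le_mul_of_nonneg_left ?_ (by positivity)
            simpa using hZ (z : X) z.2
        _ = ε * ‖z‖ := by
            field_simp
    have hzz : ‖(z : X)‖ = ‖z‖ := rfl
    have hT : (Z.subtypeL - g.comp Z.subtypeL) z = (z : X) - g (z : X) := rfl
    constructor
    · have := norm_sub_norm_le (z : X) (g (z : X))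
      rw [hT]
      have h1 : ‖(z : X)‖ - ‖g (z : X)‖ ≤ ‖(z : X) - g (z : X)‖ := norm_sub_norm_le _ _
      have h2 : ‖(z : X)‖ - ε * ‖z‖ ≤ ‖(z : X)‖ - ‖g (z : X)‖ := by linarith
      rw [hzz] at h1 h2
      calc (1 - ε) * ‖z‖ = ‖z‖ - ε * ‖z‖ := by ring
        _ ≤ ‖z‖ - ‖g (z : X)‖ := h2
        _ ≤ ‖(z : X) - g (z : X)‖ := h1
    · rw [hT]
      calc ‖(z : X) - g (z : X)‖ ≤ ‖(z : X)‖ + ‖g (z : X)‖ := norm_sub_le _ _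
        _ ≤ ‖z‖ + ε * ‖z‖ := by rw [hzz]; linarith
        _ = (1 + ε) * ‖z‖ := by ring
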